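/- For each n ≥ 2 there exists a matrix A ∈ ℤ^{(n−1)×n} with ‖A‖_∞ = 2, such that both the primal graph G_P(A) and the dual graph G_D(A) have treewidth 1, yet the Graver basis of A contains an element of ℓ_∞-norm at least 2^{n−1}. Concretely, A is the matrix with rows (0,…,0,2,−1,0,…,0) (2 in column i, −1 in column i+1), whose kernel vectors x satisfy x_{i+1} = 2x_i, so h = (1,2,4,…,2^{n−1}) is a ⊑-minimal nonzero kernel element. -/

import Mathlib

/-- `x` is conformal to `y`. -/
def ConformalTo {n : ℕ} (x y : Fin n → ℤ) : Prop :=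
  ∀ i, 0 ≤ x i * y i ∧ |x i| ≤ |y i|

/-- `g` is an element of the Graver basis of `A`. -/
def InGraver {m n : ℕ} (A : Matrix (Fin m) (Fin n) ℤ) (g : Fin n → ℤ) : Prop :=
  g ≠ 0 ∧ A.mulVec g = 0 ∧
    ∀ h : Fin n → ℤ, h ≠ 0 → A.mulVec h = 0 → ConformalTo h g → h = g

/-- The primal graph of `A`: vertices are columns, two columns adjacent if some
row is nonzero in both. -/
def primalGraph {m n : ℕ} (A : Matrix (Fin m) (Fin n) ℤ) : SimpleGraph (Fin n) where
  Adj i j := i ≠ j ∧ ∃ r, A r i ≠ 0 ∧ A r j ≠ 0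
  symm := ⟨by rintro i j ⟨hij, r, h1, h2⟩; exact ⟨hij.symm, r, h2, h1⟩⟩
  loopless := ⟨by rintro i ⟨hii, -⟩; exact hii rfl⟩

/-- The dual graph of `A` is the primal graph of its transpose. -/
def dualGraph {m n : ℕ} (A : Matrix (Fin m) (Fin n) ℤ) : SimpleGraph (Fin m) :=
  primalGraph (Matrix.transpose A)

/-- An invariant preserved by adjacency is preserved by reachability. -/
lemma reach_invariant {V : Type*} {G : SimpleGraph V} {P : V → Prop}
    (h : ∀ a b, G.Adj a b → (P a ↔ P b)) {u v : V} (r : G.Reachable u v) :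
    P u ↔ P v := by
  obtain ⟨w⟩ := r
  induction w with
  | nil => exact Iff.rfl
  | cons ha _ ih => exact (h _ _ ha).trans ih

lemma half_bridge {n : ℕ} {G : SimpleGraph (Fin n)}
    (hG : ∀ u v : Fin n, G.Adj u v → (u : ℕ) + 1 = v ∨ (v : ℕ) + 1 = u)
    {v w : Fin n} (hvw : (v : ℕ) + 1 = w) :
    ¬ (G \ SimpleGraph.fromEdgeSet {s(v, w)}).Reachable v w := by
  intro hr
  have key : ∀ a b : Fin n, (G \ SimpleGraph.fromEdgeSet {s(v, w)}).Adj a b →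
      (((a : ℕ) ≤ v) ↔ ((b : ℕ) ≤ v)) := by
    intro a b hab
    rw [SimpleGraph.sdiff_adj] at hab
    obtain ⟨hab1, hab2⟩ := hab
    rw [SimpleGraph.fromEdgeSet_adj] at hab2
    push_neg at hab2
    have hne : a ≠ b := hab1.ne
    have hedge : s(a, b) ≠ s(v, w) := fun hh => hne (hab2 (by simp [hh]))
    have hcases := hG a b hab1
    have hvals : ¬ (a = v ∧ b = w) ∧ ¬ (a = w ∧ b = v) := by
      constructor
      · rintro ⟨rfl, rfl⟩; exact hedge rfl
      · rintro ⟨rfl, rfl⟩; exact hedge (Sym2.eq_swap)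
    have hv1 : ¬ ((a : ℕ) = v ∧ (b : ℕ) = w) := by
      rintro ⟨h1, h2⟩; exact hvals.1 ⟨Fin.ext h1, Fin.ext h2⟩
    have hv2 : ¬ ((a : ℕ) = w ∧ (b : ℕ) = v) := by
      rintro ⟨h1, h2⟩; exact hvals.2 ⟨Fin.ext h1, Fin.ext h2⟩
    omega
  have := reach_invariant key hr
  omega

/-- A graph on `Fin n` whose adjacency forces consecutive values is acyclic. -/
lemma pathlike_acyclic {n : ℕ} {G : SimpleGraph (Fin n)}
    (hG : ∀ u v : Fin n, G.Adj u v → (u : ℕ) + 1 = v ∨ (v : ℕ) + 1 = u) :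
    G.IsAcyclic := by
  rw [SimpleGraph.isAcyclic_iff_forall_adj_isBridge]
  intro v w hvw
  rw [SimpleGraph.isBridge_iff]
  rcases hG v w hvw with h | h
  · exact half_bridge hG h
  · rw [Sym2.eq_swap]
    intro hr
    exact half_bridge hG h hr.symm

theorem constant_treewidth_large_graver (m : ℕ) (hm : 1 ≤ m) :
    ∃ A : Matrix (Fin m) (Fin (m + 1)) ℤ,
      (∀ i j, A i j =
        if j = Fin.castSucc i then 2 else if j = Fin.succ i then -1 else 0) ∧
      (∀ i j, |A i j| ≤ 2) ∧ (∃ i j, |A i j| = 2) ∧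
      (primalGraph A).IsAcyclic ∧ (dualGraph A).IsAcyclic ∧
      (∀ x : Fin (m + 1) → ℤ, A.mulVec x = 0 →
        ∀ i : Fin m, x (Fin.succ i) = 2 * x (Fin.castSucc i)) ∧
      ∃ hvec : Fin (m + 1) → ℤ, InGraver A hvec ∧ ∃ i, (2 : ℤ) ^ m ≤ |hvec i| := by
  set A : Matrix (Fin m) (Fin (m + 1)) ℤ := fun i j =>
    if j = Fin.castSucc i then 2 else if j = Fin.succ i then -1 else 0 with hA
  have hne : ∀ i : Fin m, Fin.castSucc i ≠ Fin.succ i :=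
    fun i => (Fin.castSucc_lt_succ).ne
  have hnz : ∀ (r : Fin m) (c : Fin (m + 1)),
      A r c ≠ 0 ↔ (c = Fin.castSucc r ∨ c = Fin.succ r) := by
    intro r c
    by_cases h1 : c = Fin.castSucc r <;> by_cases h2 : c = Fin.succ r <;>
      simp [hA, h1, h2, (hne r).symm]
  -- row sum formula
  have hrow : ∀ (x : Fin (m + 1) → ℤ) (i : Fin m),
      A.mulVec x i = 2 * x (Fin.castSucc i) - x (Fin.succ i) := by
    intro x i
    have hsplit : ∀ j, A i j * x j =
        (if j = Fin.castSucc i then 2 * x j else 0) +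
        (if j = Fin.succ i then -x j else 0) := by
      intro j
      by_cases h1 : j = Fin.castSucc i <;> by_cases h2 : j = Fin.succ i
      · exact absurd (h1 ▸ h2) (hne i)
      · simp [hA, h1, h2, hne i, (hne i).symm]
      · simp [hA, h1, h2, hne i, (hne i).symm]
      · simp [hA, h1, h2, hne i, (hne i).symm]
    unfold Matrix.mulVec dotProduct
    rw [Finset.sum_congr rfl fun j _ => hsplit j, Finset.sum_add_distrib]
    simp [Finset.sum_ite_eq']
    ring
  refine ⟨A, fun i j => rfl, ?_, ?_, ?_, ?_, ?_, ?_⟩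
  · intro i j
    by_cases h1 : j = Fin.castSucc i <;> by_cases h2 : j = Fin.succ i <;>
      norm_num [hA, h1, h2, (hne i).symm]
  · refine ⟨⟨0, hm⟩, Fin.castSucc ⟨0, hm⟩, ?_⟩
    simp [hA]
  · apply pathlike_acyclic
    rintro u v ⟨huv, r, h1, h2⟩
    rw [hnz] at h1 h2
    have hu : (u : ℕ) = r ∨ (u : ℕ) = (r : ℕ) + 1 := by
      rcases h1 with h | h <;> subst h <;> simp
    have hv : (v : ℕ) = r ∨ (v : ℕ) = (r : ℕ) + 1 := by
      rcases h2 with h | h <;> subst h <;> simp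
    have : (u : ℕ) ≠ v := fun hh => huv (Fin.ext hh)
    omega
  · apply pathlike_acyclic
    rintro u v ⟨huv, c, h1, h2⟩
    rw [Matrix.transpose_apply] at h1 h2
    rw [hnz] at h1 h2
    have hu : (c : ℕ) = u ∨ (c : ℕ) = (u : ℕ) + 1 := by
      rcases h1 with h | h <;> subst h <;> simp
    have hv : (c : ℕ) = v ∨ (c : ℕ) = (v : ℕ) + 1 := by
      rcases h2 with h | h <;> subst h <;> simp
    have : (u : ℕ) ≠ v := fun hh => huv (Fin.ext hh)
    omega
  · intro x hx i
    have := congrFun hx i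
    rw [hrow] at this
    simp only [Pi.zero_apply] at this
    linarith
  · refine ⟨fun i => 2 ^ (i : ℕ), ?_, Fin.last m, ?_⟩
    · have hker : A.mulVec (fun i : Fin (m + 1) => (2 : ℤ) ^ (i : ℕ)) = 0 := by
        funext i
        simp only [Pi.zero_apply]
        rw [hrow, Fin.val_succ, Fin.coe_castSucc, pow_succ]
        ring
      refine ⟨?_, hker, ?_⟩
      · intro h0
        have := congrFun h0 0
        simp at this
      · intro h hne0 hker' hconf
        have hrec : ∀ i : Fin m, h (Fin.succ i) = 2 * h (Fin.castSucc i) := by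
          intro i
          have := congrFun hker' i
          rw [hrow] at this
          simp only [Pi.zero_apply] at this
          linarith
        have hform : ∀ i : Fin (m + 1), h i = h 0 * 2 ^ (i : ℕ) := by
          intro i
          induction i using Fin.induction with
          | zero => simp
          | succ i ih =>
            rw [hrec i, ih, Fin.val_succ, Fin.coe_castSucc, pow_succ]
            ring
        have h0 : h 0 = 1 := by
          have hc := hconf 0
          simp only [Fin.val_zero, pow_zero, mul_one] at hc
          have habs : |h 0| ≤ 1 := by simpa using hc.2
          have hpos : 0 ≤ h 0 := hc.1
          have hn0 : h 0 ≠ 0 := by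
            intro hz
            apply hne0
            funext i
            rw [hform i, hz, zero_mul]
            simp
          rcases abs_le.mp habs with ⟨hl, hr⟩
          omega
        funext i
        rw [hform i, h0, one_mul]
    · simp [Fin.val_last]
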